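/- Let A be a Noetherian p-adically complete commutative ring and Q a finitely generated p-torsion-free A-module such that Q/pQ is a projective A/pA-module. Then Q is a projective A-module. -/

import Mathlib

open Submodule

section aux
variable {A : Type*} [CommRing A] {M N : Type*} [AddCommGroup M] [Module A M]
  [AddCommGroup N] [Module A N]

/-- A linear map sends `J • ⊤` into `J • ⊤`. -/
lemma aux_map_smul_top (f : M →ₗ[A] N) {J : Ideal A} {x : M}
    (hx : x ∈ J • (⊤ : Submodule A M)) : f x ∈ J • (⊤ : Submodule A N) := by
  refine Submodule.smul_induction_on hx (fun a ha m _ => ?_) (fun x y hx hy => ?_)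
  · rw [map_smul]; exact Submodule.smul_mem_smul ha trivial
  · rw [map_add]; exact add_mem hx hy

lemma aux_mem_smul_top_equiv (e : M ≃ₗ[A] N) {J : Ideal A} {x : M} :
    e x ∈ J • (⊤ : Submodule A N) ↔ x ∈ J • (⊤ : Submodule A M) := by
  constructor
  · intro h
    have h2 := aux_map_smul_top (e.symm.toLinearMap) h
    simpa using h2
  · exact fun h => aux_map_smul_top e.toLinearMap h

lemma aux_pi_mem_smul_top {ι : Type*} [Fintype ι] [DecidableEq ι] {J : Ideal A}
    (x : ι → M) : x ∈ J • (⊤ : Submodule A (ι → M)) ↔ ∀ i, x i ∈ J • (⊤ : Submodule A M) := by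
  constructor
  · exact fun h i => aux_map_smul_top (LinearMap.proj i) h
  · intro h
    rw [← Finset.univ_sum_single x]
    exact Submodule.sum_mem _ fun i _ =>
      aux_map_smul_top (LinearMap.single A (fun _ => M) i) (h i)

lemma aux_span_singleton_smul_top_iff (a : A) (x : M) :
    x ∈ Ideal.span {a} • (⊤ : Submodule A M) ↔ ∃ y, x = a • y := by
  constructor
  · intro h
    refine Submodule.smul_induction_on h (fun r hr m _ => ?_) (fun x y hx hy => ?_)
    · obtain ⟨c, rfl⟩ := Ideal.mem_span_singleton'.mp hr
      exact ⟨c • m, by rw [mul_comm, mul_smul]⟩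
    · obtain ⟨y₁, rfl⟩ := hx
      obtain ⟨y₂, rfl⟩ := hy
      exact ⟨y₁ + y₂, (smul_add _ _ _).symm⟩
  · rintro ⟨y, rfl⟩
    exact Submodule.smul_mem_smul (Ideal.mem_span_singleton_self a) trivial

lemma aux_isHausdorff_equiv (I : Ideal A) (e : M ≃ₗ[A] N) (h : IsHausdorff I M) :
    IsHausdorff I N := by
  constructor
  intro x hx
  have : e.symm x = 0 := by
    refine h.haus _ fun n => ?_
    have h1 := SModEq.sub_mem.mp (hx n)
    rw [sub_zero] at h1
    rw [SModEq.sub_mem, sub_zero]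
    exact aux_map_smul_top e.symm.toLinearMap h1
  simpa using congrArg e this

lemma aux_isPrecomplete_equiv (I : Ideal A) (e : M ≃ₗ[A] N) (h : IsPrecomplete I M) :
    IsPrecomplete I N := by
  constructor
  intro f hf
  have hcau : ∀ {m n : ℕ}, m ≤ n →
      e.symm (f m) ≡ e.symm (f n) [SMOD (I ^ m • ⊤ : Submodule A M)] := by
    intro m n hmn
    rw [SModEq.sub_mem, ← map_sub]
    exact aux_map_smul_top e.symm.toLinearMap (SModEq.sub_mem.mp (hf hmn))
  obtain ⟨L, hL⟩ := h.prec (f := fun n => e.symm (f n)) hcau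
  refine ⟨e L, fun n => ?_⟩
  rw [SModEq.sub_mem]
  have h2 := aux_map_smul_top e.toLinearMap (SModEq.sub_mem.mp (hL n))
  simpa using h2

lemma aux_isHausdorff_pi {ι : Type*} [Fintype ι] [DecidableEq ι] (I : Ideal A)
    (h : IsHausdorff I M) : IsHausdorff I (ι → M) := by
  constructor
  intro x hx
  funext i
  show x i = 0
  refine h.haus _ fun n => ?_
  rw [SModEq.sub_mem, sub_zero]
  have h1 := SModEq.sub_mem.mp (hx n)
  rw [sub_zero] at h1
  exact (aux_pi_mem_smul_top x).1 h1 i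

lemma aux_isPrecomplete_pi {ι : Type*} [Fintype ι] [DecidableEq ι] (I : Ideal A)
    (h : IsPrecomplete I M) : IsPrecomplete I (ι → M) := by
  constructor
  intro f hf
  have key : ∀ i, ∃ L : M, ∀ n, f n i ≡ L [SMOD (I ^ n • ⊤ : Submodule A M)] := by
    intro i
    refine h.prec (f := fun n => f n i) ?_
    intro m n hmn
    rw [SModEq.sub_mem]
    exact (aux_pi_mem_smul_top _).1 (SModEq.sub_mem.mp (hf hmn)) i
  choose L hL using key
  refine ⟨L, fun n => ?_⟩
  rw [SModEq.sub_mem]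
  rw [show f n - L = fun i => f n i - L i from rfl]
  rw [aux_pi_mem_smul_top]
  intro i
  exact SModEq.sub_mem.mp (hL i n)

end aux

/-- Newton iteration for lifting idempotents. -/
def auxNewton {R : Type*} [Ring R] (u : R) : ℕ → R
  | 0 => u
  | k+1 => 3 * (auxNewton u k)^2 - 2 * (auxNewton u k)^3

lemma aux_id1 {R : Type*} [Ring R] (a : R) :
    (3*a^2 - 2*a^3) - a = -((2*a-1)*(a^2-a)) := by noncomm_ring

lemma aux_id3 {R : Type*} [Ring R] (E s : R) :
    E*E - E = E*(E - s) + (E - s)*s + (s^2 - s) + (s - E) := by noncomm_ring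

lemma aux_id2 {R : Type*} [Ring R] (a : R) :
    (3*a^2 - 2*a^3)^2 - (3*a^2 - 2*a^3) = (4*(a^2-a)-3)*((a^2-a)*(a^2-a)) := by noncomm_ring

set_option maxHeartbeats 1600000 in
/-- If `A` is a Noetherian `p`-adically complete commutative ring and `Q` a finitely
generated `p`-torsion-free `A`-module such that `Q/pQ` is projective over `A/pA`,
then `Q` is a projective `A`-module. -/
theorem stmt_0 (p : ℕ) (hp : p.Prime) (A : Type*) [CommRing A] [IsNoetherianRing A]
    (hA : IsAdicComplete (Ideal.span {(p : A)}) A)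
    (Q : Type*) [AddCommGroup Q] [Module A Q] [Module.Finite A Q]
    (hQ : Function.Injective fun q : Q => (p : A) • q)
    (hproj : Module.Projective (A ⧸ Ideal.span {(p : A)})
      (Q ⧸ (Ideal.span {(p : A)} • (⊤ : Submodule A Q)))) :
    Module.Projective A Q := by
  classical
  set I : Ideal A := Ideal.span {(p : A)} with hIdef
  have hpI : (p : A) ∈ I := Ideal.mem_span_singleton_self _
  haveI : IsAdicComplete I A := hA
  -- p-power torsion-freeness of Q
  have ptorsion : ∀ (k : ℕ) (v : Q), (p : A)^k • v = 0 → v = 0 := by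
    intro k
    induction k with
    | zero => intro v hv; simpa using hv
    | succ k ih =>
      intro v hv
      rw [pow_succ, mul_smul] at hv
      have h2 := ih _ hv
      exact hQ (show (p : A) • v = (p : A) • 0 by simpa using h2)
  -- a finite free presentation
  obtain ⟨m, π, hπ⟩ := Module.Finite.exists_fin' A Q
  set F := (Fin m → A) with hFdef
  -- completeness of F and End(F)
  haveI hFhaus : IsHausdorff I F := aux_isHausdorff_pi I hA.toIsHausdorff
  haveI hFprec : IsPrecomplete I F := aux_isPrecomplete_pi I hA.toIsPrecomplete
  set ε : Module.End A F ≃ₗ[A] (Fin m → F) := LinearEquiv.piRing A F (Fin m) A with hεdef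
  haveI hEhaus : IsHausdorff I (Module.End A F) :=
    aux_isHausdorff_equiv I ε.symm (aux_isHausdorff_pi I hFhaus)
  haveI hEprec : IsPrecomplete I (Module.End A F) :=
    aux_isPrecomplete_equiv I ε.symm (aux_isPrecomplete_pi I hFprec)
  -- membership criterion in End(F)
  have hEndMem : ∀ (J : Ideal A) (f : Module.End A F),
      f ∈ J • (⊤ : Submodule A (Module.End A F)) ↔
      ∀ x, f x ∈ J • (⊤ : Submodule A F) := by
    intro J f
    constructor
    · intro h x
      refine Submodule.smul_induction_on h (fun a ha g _ => ?_) (fun g₁ g₂ h₁ h₂ => ?_)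
      · exact Submodule.smul_mem_smul ha trivial
      · exact add_mem h₁ h₂
    · intro h
      rw [← aux_mem_smul_top_equiv ε]
      rw [aux_pi_mem_smul_top]
      intro i
      exact h (Pi.single i 1)
  -- quotient maps
  set mkF : F →ₗ[A] (F ⧸ (I • (⊤ : Submodule A F))) := Submodule.mkQ _ with hmkF
  set mkQ' : Q →ₗ[A] (Q ⧸ (I • (⊤ : Submodule A Q))) := Submodule.mkQ _ with hmkQ
  have hcomap : (I • (⊤ : Submodule A F)) ≤ (I • (⊤ : Submodule A Q)).comap π :=
    fun x hx => aux_map_smul_top π hx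
  set π₀ : (F ⧸ (I • (⊤ : Submodule A F))) →ₗ[A] (Q ⧸ (I • (⊤ : Submodule A Q))) :=
    Submodule.mapQ _ _ π hcomap with hπ₀def
  have hπ₀ : ∀ x : F, π₀ (mkF x) = mkQ' (π x) := fun x => Submodule.mapQ_apply _ _ _ x
  set πb := π₀.extendScalarsOfSurjective
    (Ideal.Quotient.mk_surjective : Function.Surjective (algebraMap A (A ⧸ I))) with hπbdef
  have hπbπ₀ : ∀ z, πb z = π₀ z := fun z => rfl
  have hπbsurj : Function.Surjective πb := by
    intro y
    obtain ⟨q, rfl⟩ := Submodule.mkQ_surjective _ y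
    obtain ⟨x, rfl⟩ := hπ q
    exact ⟨mkF x, by rw [hπbπ₀]; exact hπ₀ x⟩
  haveI := hproj
  obtain ⟨σb, hσb⟩ := Module.projective_lifting_property πb LinearMap.id hπbsurj
  have hπσ : ∀ y, πb (σb y) = y := fun y => LinearMap.congr_fun hσb y
  -- the A-linear endomorphism of F̄
  set eb : (F ⧸ (I • (⊤ : Submodule A F))) →ₗ[A] (F ⧸ (I • (⊤ : Submodule A F))) :=
    (σb.comp πb).restrictScalars A with hebdef
  have heb_apply : ∀ z, eb z = σb (πb z) := fun z => rfl
  have heb_idem : ∀ z, eb (eb z) = eb z := by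
    intro z
    rw [heb_apply, heb_apply, hπσ]
  -- lift eb to u : F →ₗ F using freeness of F
  obtain ⟨u, hu⟩ := Module.projective_lifting_property mkF (eb.comp mkF)
    (Submodule.mkQ_surjective _)
  have huk : ∀ x : F, mkF (u x) = eb (mkF x) := fun x => LinearMap.congr_fun hu x
  -- Newton iteration
  set seq : ℕ → Module.End A F := auxNewton u with hseq
  have hseq0 : seq 0 = u := rfl
  have hseqS : ∀ k, seq (k+1) = 3 * (seq k)^2 - 2 * (seq k)^3 := fun k => rfl
  have hinv : ∀ k x, ((seq k)^2 - seq k) x ∈ (I^(2^k)) • (⊤ : Submodule A F) := by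
    intro k
    induction k with
    | zero =>
      intro x
      have key : mkF (u (u x)) = mkF (u x) := by
        rw [huk (u x), huk x, heb_idem]
      have hmem : u (u x) - u x ∈ I • (⊤ : Submodule A F) :=
        (Submodule.Quotient.eq _).mp key
      simpa [hseq0, pow_two, Module.End.mul_apply, LinearMap.sub_apply] using hmem
    | succ k ih =>
      intro x
      set t : Module.End A F := (seq k)^2 - seq k with ht
      have h2 : t (t x) ∈ (I^(2^(k+1))) • (⊤ : Submodule A F) := by
        have hJ : t (t x) ∈ (I^(2^k)) • ((I^(2^k)) • (⊤ : Submodule A F)) := by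
          refine Submodule.smul_induction_on (ih x) (fun c hc z _ => ?_) (fun z₁ z₂ h₁ h₂ => ?_)
          · rw [map_smul]; exact Submodule.smul_mem_smul hc (ih z)
          · rw [map_add]; exact add_mem h₁ h₂
        rwa [← Submodule.smul_assoc, smul_eq_mul, ← pow_add,
          show 2^k + 2^k = 2^(k+1) by rw [pow_succ, mul_two]] at hJ
      have hid : (seq (k+1))^2 - seq (k+1) = (4*t-3)*(t*t) := by
        rw [hseqS k, ht]; exact aux_id2 (seq k)
      have happ : ((seq (k+1))^2 - seq (k+1)) x = (4*t-3) (t (t x)) := by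
        rw [hid, Module.End.mul_apply, Module.End.mul_apply]
      rw [happ]
      exact aux_map_smul_top (4*t-3 : Module.End A F) h2
  have hcau : ∀ k x, (seq (k+1) - seq k) x ∈ (I^(2^k)) • (⊤ : Submodule A F) := by
    intro k x
    have hid : seq (k+1) - seq k = -((2*(seq k)-1)*((seq k)^2-(seq k))) := by
      rw [hseqS k]; exact aux_id1 (seq k)
    rw [hid, LinearMap.neg_apply, Module.End.mul_apply]
    exact neg_mem (aux_map_smul_top _ (hinv k x))
  have hcauE : ∀ k, seq (k+1) - seq k ∈ (I^(2^k)) • (⊤ : Submodule A (Module.End A F)) :=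
    fun k => (hEndMem _ _).2 (hcau k)
  have hinvE : ∀ k, (seq k)^2 - seq k ∈ (I^(2^k)) • (⊤ : Submodule A (Module.End A F)) :=
    fun k => (hEndMem _ _).2 (hinv k)
  have tele : ∀ n k, n ≤ k → seq k - seq n ∈ (I^n) • (⊤ : Submodule A (Module.End A F)) := by
    intro n k hk
    induction k, hk using Nat.le_induction with
    | base => rw [sub_self]; exact zero_mem _
    | succ k hnk ih =>
      have h1 : seq (k+1) - seq n = (seq (k+1) - seq k) + (seq k - seq n) := by abel
      rw [h1]
      refine add_mem (Submodule.smul_mono_left (Ideal.pow_le_pow_right ?_) (hcauE k)) ih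
      exact le_trans hnk (Nat.le_of_lt (Nat.lt_two_pow_self (n := k)))
  obtain ⟨E, hE⟩ := hEprec.prec (f := seq) (by
    intro m' n' hmn
    rw [SModEq.sub_mem, show seq m' - seq n' = -(seq n' - seq m') by abel]
    exact neg_mem (tele m' n' hmn))
  have hEn : ∀ n, seq n - E ∈ (I^n) • (⊤ : Submodule A (Module.End A F)) :=
    fun n => SModEq.sub_mem.mp (hE n)
  have hEE : E * E = E := by
    refine sub_eq_zero.mp (hEhaus.haus _ fun n => ?_)
    rw [SModEq.sub_mem, sub_zero]
    have hd : E*E - E = (LinearMap.mulLeft A E) (E - seq n)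
        + (LinearMap.mulRight A (seq n)) (E - seq n)
        + ((seq n)^2 - seq n) + (seq n - E) := by
      simp only [LinearMap.mulLeft_apply, LinearMap.mulRight_apply]
      exact aux_id3 E (seq n)
    rw [hd]
    refine add_mem (add_mem (add_mem ?_ ?_) ?_) (hEn n)
    · exact aux_map_smul_top (LinearMap.mulLeft A E)
        (by rw [show E - seq n = -(seq n - E) by abel]; exact neg_mem (hEn n))
    · exact aux_map_smul_top (LinearMap.mulRight A (seq n))
        (by rw [show E - seq n = -(seq n - E) by abel]; exact neg_mem (hEn n))
    · exact Submodule.smul_mono_left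
        (Ideal.pow_le_pow_right (Nat.le_of_lt (Nat.lt_two_pow_self (n := n)))) (hinvE n)
  have hEu : E - u ∈ I • (⊤ : Submodule A (Module.End A F)) := by
    have h1 : seq 1 - E ∈ (I^1) • (⊤ : Submodule A (Module.End A F)) := hEn 1
    have h2 : seq 1 - seq 0 ∈ (I^(2^0)) • (⊤ : Submodule A (Module.End A F)) := hcauE 0
    rw [pow_one] at h1
    rw [pow_zero, pow_one] at h2
    have h3 : E - u = -(seq 1 - E) + (seq 1 - seq 0) := by rw [hseq0]; abel
    rw [h3]
    exact add_mem (neg_mem h1) h2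
  have hEux : ∀ x, E x - u x ∈ I • (⊤ : Submodule A F) := by
    intro x
    have := (hEndMem I (E - u)).1 hEu x
    simpa [LinearMap.sub_apply] using this
  have hEmk : ∀ x, mkF (E x) = eb (mkF x) := by
    intro x
    have h0 : mkF (E x - u x) = 0 := (Submodule.Quotient.mk_eq_zero _).2 (hEux x)
    have h1 : mkF (E x) = mkF (u x) + mkF (E x - u x) := by
      rw [← map_add]; congr 1; abel
    rw [h1, h0, add_zero, huk x]
  -- Nakayama: π ∘ E is surjective
  have hjac : I ≤ (⊥ : Ideal A).jacobson := IsAdicComplete.le_jacobson_bot I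
  have hQmod : ∀ x : F, π x - π (E x) ∈ I • (⊤ : Submodule A Q) := by
    intro x
    have e1 : π x - π (u x) ∈ I • (⊤ : Submodule A Q) := by
      have hmkeq : mkQ' (π x) = mkQ' (π (u x)) := by
        rw [← hπ₀, ← hπ₀, huk x, heb_apply]
        rw [← hπbπ₀ (σb (πb (mkF x))), hπσ, hπbπ₀]
      exact (Submodule.Quotient.eq _).mp hmkeq
    have e2 : π (u x) - π (E x) ∈ I • (⊤ : Submodule A Q) := by
      have h3 := aux_map_smul_top π (neg_mem (hEux x))
      rw [map_neg, map_sub] at h3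
      simpa [neg_sub] using h3
    have h4 := add_mem e1 e2
    rwa [sub_add_sub_cancel] at h4
  have hsur : Function.Surjective (π ∘ₗ E) := by
    rw [← LinearMap.range_eq_top]
    refine eq_top_iff.mpr (Submodule.le_of_le_smul_of_le_jacobson_bot
      Module.Finite.fg_top hjac ?_)
    intro q _
    obtain ⟨x, rfl⟩ := hπ q
    have h5 : π x = π (E x) + (π x - π (E x)) := by abel
    rw [h5]
    exact Submodule.add_mem_sup ⟨x, rfl⟩ (hQmod x)
  -- p-adic separatedness: π is injective on the range of E
  have hfix : ∀ x ∈ LinearMap.range E, E x = x := by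
    rintro x ⟨w, rfl⟩
    rw [← Module.End.mul_apply, hEE]
  have hker : ∀ x : F, E x = x → π x = 0 → x = 0 := by
    intro x hEx hπx
    have hmem : ∀ k, x ∈ (I^k) • (⊤ : Submodule A F) := by
      intro k
      induction k with
      | zero =>
        rw [pow_zero, Ideal.one_eq_top, Submodule.top_smul]
        exact Submodule.mem_top
      | succ k ih =>
        rw [hIdef, Ideal.span_singleton_pow] at ih
        obtain ⟨y, hy⟩ := (aux_span_singleton_smul_top_iff _ x).1 ih
        have hπy : π y = 0 := ptorsion k _ (by rw [← map_smul, ← hy, hπx])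
        have huy : u y ∈ I • (⊤ : Submodule A F) := by
          have h0 : πb (mkF y) = 0 := by rw [hπbπ₀, hπ₀, hπy, map_zero]
          have h1 : mkF (u y) = 0 := by rw [huk, heb_apply, h0, map_zero]
          exact (Submodule.Quotient.mk_eq_zero _).1 h1
        have hEy : E y ∈ I • (⊤ : Submodule A F) := by
          have h2 : E y = (E y - u y) + u y := by abel
          rw [h2]; exact add_mem (hEux y) huy
        have hxE : x = (p:A)^k • (E y) := by
          calc x = E x := hEx.symm
          _ = E ((p:A)^k • y) := by rw [← hy]
          _ = (p:A)^k • (E y) := map_smul _ _ _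
        rw [hxE]
        have h6 : (p:A)^k • (E y) ∈ (I^k) • (I • (⊤ : Submodule A F)) :=
          Submodule.smul_mem_smul (Ideal.pow_mem_pow hpI k) hEy
        rwa [← Submodule.smul_assoc, smul_eq_mul, ← pow_succ] at h6
    exact hFhaus.haus x (fun n => by rw [SModEq.sub_mem, sub_zero]; exact hmem n)
  -- conclude
  set Erng := LinearMap.range E with hErng
  set g : Erng →ₗ[A] Q := π.comp Erng.subtype with hg
  have hg_bij : Function.Bijective g := by
    constructor
    · intro z w hzw
      have h0 : g (z - w) = 0 := by rw [map_sub, hzw, sub_self]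
      have hz : ((z - w : Erng) : F) = 0 := hker _ (hfix _ (z - w).2) h0
      have : z - w = 0 := by exact_mod_cast Subtype.ext hz
      exact sub_eq_zero.mp this
    · intro q
      obtain ⟨x, hx⟩ := hsur q
      exact ⟨⟨E x, ⟨x, rfl⟩⟩, hx⟩
  set eqv := LinearEquiv.ofBijective g hg_bij with heqv
  refine Module.Projective.of_split (M := F)
    (Erng.subtype ∘ₗ eqv.symm.toLinearMap) (π ∘ₗ E) ?_
  ext q
  simp only [LinearMap.comp_apply, LinearMap.id_apply, LinearEquiv.coe_coe,
    Submodule.coe_subtype]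
  rw [hfix _ (eqv.symm q).2]
  have h7 : π ((eqv.symm q : Erng) : F) = g (eqv.symm q) := rfl
  have h8 : g (eqv.symm q) = eqv (eqv.symm q) := rfl
  rw [h7, h8, eqv.apply_symm_apply]
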